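/- Suppose the DAG 𝒟 is not perfect, i.e., some vertex has two distinct parents that are not adjacent. Let E^m = {(j, i) : j > i, j and i adjacent in the moral graph 𝒟^m} ∪ {(i, i) : 1 ≤ i ≤ p}. Then the image of Θ_𝒟 under the map (D, L) ↦ ((L D^{-1} Lᵀ)_{ji})_{(j,i) ∈ E^m} is a Lebesgue-null subset of ℝ^{E^m}; i.e., the space of precision matrices P_𝒟, viewed through its moral-graph coordinates, has Lebesgue measure zero. -/

import Mathlib

open MeasureTheory Matrix

noncomputable section

/-- Index type for the free coordinates of a lower triangular matrix `L ∈ ℒ_𝒟`. -/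
abbrev Edges {p : ℕ} (pa : Fin p → Finset (Fin p)) : Type := Σ i : Fin p, {j // j ∈ pa i}

/-- The matrix `L ∈ ℒ_𝒟` built from its free coordinates. -/
def mkL {p : ℕ} (pa : Fin p → Finset (Fin p)) (y : Edges pa → ℝ) :
    Matrix (Fin p) (Fin p) ℝ :=
  Matrix.of fun j i => if j = i then 1 else if h : j ∈ pa i then y ⟨i, j, h⟩ else 0

/-- The Cholesky space `Θ_𝒟` in free coordinates: diagonal coordinates positive. -/
def thetaSet {p : ℕ} (pa : Fin p → Finset (Fin p)) :
    Set ((Fin p → ℝ) × (Edges pa → ℝ)) :=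
  {x | ∀ i, 0 < x.1 i}

/-- Adjacency in the moral graph `𝒟^m` of the DAG `𝒟` (for distinct vertices). -/
def MoralAdj {p : ℕ} (pa : Fin p → Finset (Fin p)) (i j : Fin p) : Prop :=
  i ∈ pa j ∨ j ∈ pa i ∨ ∃ k : Fin p, i ∈ pa k ∧ j ∈ pa k

/-- The index set `E^m`: loops `(i,i)` together with pairs `(j,i)`, `j > i`, adjacent in
the moral graph. -/
def EmT {p : ℕ} (pa : Fin p → Finset (Fin p)) : Type :=
  {q : Fin p × Fin p // q.1 = q.2 ∨ (q.2 < q.1 ∧ MoralAdj pa q.1 q.2)}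

instance {p : ℕ} (pa : Fin p → Finset (Fin p)) : Fintype (EmT pa) := by
  classical exact (Subtype.fintype _)

/-- Entries of `mkL` depend differentiably (in fact, affinely) on the parameters. -/
lemma mkL_entry_diff {p : ℕ} (pa : Fin p → Finset (Fin p)) (a k : Fin p) :
    Differentiable ℝ (fun x : (Fin p → ℝ) × (Edges pa → ℝ) => mkL pa x.2 a k) := by
  unfold mkL
  simp only [Matrix.of_apply]
  by_cases hak : a = k
  · simp only [hak, if_pos rfl]; exact differentiable_const _
  · simp only [if_neg hak]
    by_cases h : a ∈ pa k
    · simp only [dif_pos h]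
      exact (differentiable_apply (⟨k, a, h⟩ : Edges pa)).comp (differentiable_snd (𝕜 := ℝ) (E := Fin p → ℝ) (F := Edges pa → ℝ))
    · simp only [dif_neg h]; exact differentiable_const _

/-- Entry formula for `L * diagonal d * Lᵀ`. -/
lemma LDLt_apply {p : ℕ} (L : Matrix (Fin p) (Fin p) ℝ) (d : Fin p → ℝ) (a b : Fin p) :
    (L * Matrix.diagonal d * Lᵀ) a b = ∑ j, L a j * d j * L b j := by
  rw [Matrix.mul_apply]
  simp [Matrix.mul_diagonal, Matrix.transpose_apply]

/-- if the DAG `𝒟` is not perfect, then the space of precision matrices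
`P_𝒟`, viewed through its moral-graph coordinates `ℝ^{E^m}`, has Lebesgue measure zero. -/
theorem stmt19 {p : ℕ} (hp : 1 ≤ p) (pa : Fin p → Finset (Fin p))
    (hpa : ∀ i : Fin p, ∀ j ∈ pa i, i < j)
    (hnp : ∃ k j j' : Fin p, j ∈ pa k ∧ j' ∈ pa k ∧ j ≠ j' ∧ j ∉ pa j' ∧ j' ∉ pa j) :
    volume ((fun x : (Fin p → ℝ) × (Edges pa → ℝ) => fun e : EmT pa =>
        (mkL pa x.2 * Matrix.diagonal (fun i => (x.1 i)⁻¹) * (mkL pa x.2)ᵀ) e.1.1 e.1.2) ''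
      thetaSet pa) = 0 := by
  classical
  set Dom := (Fin p → ℝ) × (Edges pa → ℝ)
  set E := EmT pa → ℝ with hE
  -- the polynomial version of the map (no inverses)
  set g : Dom → E := fun x => fun e : EmT pa =>
      (mkL pa x.2 * Matrix.diagonal x.1 * (mkL pa x.2)ᵀ) e.1.1 e.1.2 with hg_def
  -- extra moral edge coming from non-perfectness
  obtain ⟨k, j, j', hj, hj', hne, h1, h2⟩ := hnp
  obtain ⟨a, b, ha, hb, hba, hnab⟩ :
      ∃ a b : Fin p, a ∈ pa k ∧ b ∈ pa k ∧ b < a ∧ a ∉ pa b := by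
    rcases lt_or_gt_of_ne hne with h | h
    · exact ⟨j', j, hj', hj, h, h2⟩
    · exact ⟨j, j', hj, hj', h, h1⟩
  -- the injection of the parameter coordinates into the moral coordinates
  set J : (Fin p ⊕ Edges pa) → EmT pa := fun s =>
    Sum.rec (fun i => ⟨(i, i), Or.inl rfl⟩)
      (fun e => ⟨(e.2.1, e.1), Or.inr ⟨hpa e.1 e.2.1 e.2.2, Or.inl e.2.2⟩⟩) s with hJ_def
  have hJ : Function.Injective J := by
    rintro (i | ⟨i, c, hc⟩) (i' | ⟨i', c', hc'⟩) h
    · simpa [J, Prod.ext_iff, Subtype.ext_iff] using congrArg (fun z => z.1.1) h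
    · exfalso
      have h1 : (i : Fin p) = c' := congrArg (fun z => Subtype.val z |>.1) h
      have h2 : (i : Fin p) = i' := congrArg (fun z => Subtype.val z |>.2) h
      exact absurd (hpa i' c' hc') (by rw [← h1, ← h2]; exact lt_irrefl i)
    · exfalso
      have h1 : (c : Fin p) = i' := congrArg (fun z => Subtype.val z |>.1) h
      have h2 : (i : Fin p) = i' := congrArg (fun z => Subtype.val z |>.2) h
      exact absurd (hpa i c hc) (by rw [h1, h2]; exact lt_irrefl i')
    · have h1 : (c : Fin p) = c' := congrArg (fun z => Subtype.val z |>.1) h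
      have h2 : (i : Fin p) = i' := congrArg (fun z => Subtype.val z |>.2) h
      subst h1
      subst h2
      rfl
  -- the extra moral edge, not hit by `J`
  set w : EmT pa := ⟨(a, b), Or.inr ⟨hba, Or.inr (Or.inr ⟨k, ha, hb⟩)⟩⟩ with hw_def
  have hwJ : ∀ s, J s ≠ w := by
    rintro (i | ⟨i, c, hc⟩) h
    · have h1 : (i : Fin p) = a := congrArg (fun z => Subtype.val z |>.1) h
      have h2 : (i : Fin p) = b := congrArg (fun z => Subtype.val z |>.2) h
      exact absurd hba (by rw [← h1, ← h2]; exact lt_irrefl i)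
    · have h1 : (c : Fin p) = a := congrArg (fun z => Subtype.val z |>.1) h
      have h2 : (i : Fin p) = b := congrArg (fun z => Subtype.val z |>.2) h
      exact hnab (by rw [← h1, ← h2]; exact hc)
  -- the linear projection from moral coordinates onto parameter coordinates
  set Pl : E →ₗ[ℝ] Dom :=
    { toFun := fun y => (fun i => y (J (Sum.inl i)), fun e => y (J (Sum.inr e)))
      map_add' := fun y z => rfl
      map_smul' := fun c y => rfl } with hPl_def
  set Pc : E →L[ℝ] Dom := LinearMap.toContinuousLinearMap Pl with hPc_def
  set G : E → E := fun y => g (Pc y) with hG_def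
  -- differentiability of g
  have hgdiff : Differentiable ℝ g := by
    rw [hg_def]
    apply differentiable_pi.2
    intro e
    have : (fun x : Dom =>
        (mkL pa x.2 * Matrix.diagonal x.1 * (mkL pa x.2)ᵀ) e.1.1 e.1.2) =
        fun x : Dom => ∑ c, mkL pa x.2 e.1.1 c * x.1 c * mkL pa x.2 e.1.2 c := by
      funext x; exact LDLt_apply _ _ _ _
    rw [this]
    apply Differentiable.fun_sum
    intro c _
    exact ((mkL_entry_diff pa e.1.1 c).mul
      ((differentiable_apply c).comp (differentiable_fst (𝕜 := ℝ) (E := Fin p → ℝ) (F := Edges pa → ℝ)))).mul (mkL_entry_diff pa e.1.2 c)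
  have hGdiff : Differentiable ℝ G := hgdiff.comp Pc.differentiable
  -- the derivative of G kills the w-direction
  have hker : ∀ x : E, ∃ m : E, m ≠ 0 ∧ (fderiv ℝ G x) m = 0 := by
    intro x
    refine ⟨Pi.single w 1, ?_, ?_⟩
    · intro h
      have := congrFun h w
      rw [Pi.single_eq_same] at this
      exact one_ne_zero this
    · have hPw : Pc (Pi.single w 1) = 0 := by
        have : Pl (Pi.single w 1) = 0 := by
          rw [hPl_def]
          refine Prod.ext (funext fun i => ?_) (funext fun e => ?_)
          · exact Pi.single_eq_of_ne (hwJ (Sum.inl i)) 1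
          · exact Pi.single_eq_of_ne (hwJ (Sum.inr e)) 1
        simpa [hPc_def] using this
      have hchain : HasFDerivAt G ((fderiv ℝ g (Pc x)).comp Pc) x :=
        ((hgdiff (Pc x)).hasFDerivAt).comp x Pc.hasFDerivAt
      rw [hchain.fderiv]
      simp [ContinuousLinearMap.comp_apply, hPw]
  -- det of the derivative of G vanishes
  have hdet : ∀ x : E, (fderiv ℝ G x).det = 0 := by
    intro x
    obtain ⟨m, hm, hm0⟩ := hker x
    have h35 := (LinearMap.hasEigenvalue_zero_tfae (K := ℝ) (M := E)
      ((fderiv ℝ G x).toLinearMap)).out 3 5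
    exact h35.mpr ⟨m, hm, hm0⟩
  -- image of G over all of E is null
  have hG0 : volume (G '' Set.univ) = 0 := by
    refine addHaar_image_eq_zero_of_det_fderivWithin_eq_zero volume
      (f' := fun x => fderiv ℝ G x) (fun x _ => ?_) (fun x _ => hdet x)
    exact (hGdiff x).hasFDerivAt.hasFDerivWithinAt
  -- the original image is contained in G '' univ
  refine le_antisymm (le_trans (measure_mono ?_) hG0.le) zero_le
  rintro _ ⟨x, hx, rfl⟩
  -- first replace the inverses: f x = g (σ x)
  set x' : Dom := (fun i => (x.1 i)⁻¹, x.2) with hx'_def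
  have hfx : (fun x : (Fin p → ℝ) × (Edges pa → ℝ) => fun e : EmT pa =>
      (mkL pa x.2 * Matrix.diagonal (fun i => (x.1 i)⁻¹) * (mkL pa x.2)ᵀ) e.1.1 e.1.2) x
      = g x' := rfl
  rw [hfx]
  -- then lift x' through the projection
  refine ⟨Function.extend J (Sum.elim x'.1 x'.2) 0, Set.mem_univ _, ?_⟩
  have hPx : Pc (Function.extend J (Sum.elim x'.1 x'.2) 0) = x' := by
    refine Prod.ext (funext fun i => ?_) (funext fun e => ?_)
    · exact hJ.extend_apply _ _ (Sum.inl i)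
    · exact hJ.extend_apply _ _ (Sum.inr e)
  show g (Pc (Function.extend J (Sum.elim x'.1 x'.2) 0)) = g x'
  rw [hPx]

end
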